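/- Let n be a positive integer and let x, y be integers. Let d be a divisor of the radical of n (the product of the distinct primes dividing n) such that x ≡ y (mod n/d). If d divides both γ_n(x) and γ_n(y), then x ≡ y (mod n). -/

import Mathlib

/-- `nPart n p = p^{v_p(n)}`, the `p`-part of `n`. -/
def nPart (n p : ℕ) : ℕ := p ^ (n.factorization p)

/-- The representative of `x` modulo `m` lying in the interval `(-m/2, m/2]`. -/
def midRep (x : ℤ) (m : ℕ) : ℤ :=
  if 2 * (x % (m : ℤ)) ≤ (m : ℤ) then x % (m : ℤ) else x % (m : ℤ) - (m : ℤ)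

/-- `|x|_m`, the absolute value of the representative of `x` modulo `m` in
`(-m/2, m/2]`. -/
def absRep (x : ℤ) (m : ℕ) : ℤ := |midRep x m|

/-- `γ_n(x)`, the product of the primes `p` dividing `n` with
`|x|_{n_p} < n_p/(2p)`. -/
def gammaFn (n : ℕ) (x : ℤ) : ℕ :=
  ∏ p ∈ n.primeFactors,
    if 2 * (p : ℤ) * absRep x (nPart n p) < (nPart n p : ℤ) then p else 1

/-- The predicate describing membership in `𝔹_n ⊆ ℤ/nℤ`:
`|x|_{n_p} > n_p/(2p)` for every prime `p` dividing `n`. -/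
def inBB (n : ℕ) (b : ZMod n) : Prop :=
  ∀ p ∈ n.primeFactors, (nPart n p : ℤ) < 2 * (p : ℤ) * absRep (b.val : ℤ) (nPart n p)


/-- The radical of `n`: the product of the distinct primes dividing `n`. -/
def radical (n : ℕ) : ℕ := ∏ p ∈ n.primeFactors, p

/-- **Lemma (Elementary, part 2).** Let `d` divide the radical of `n` and suppose
`x ≡ y (mod n/d)`.  If `d` divides both `γ_n(x)` and `γ_n(y)`, then
`x ≡ y (mod n)`. -/
lemma midRep_dvd (x : ℤ) (m : ℕ) : (m:ℤ) ∣ x - midRep x m := by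
  unfold midRep
  split_ifs
  · rw [Int.emod_def]; exact ⟨x / m, by ring⟩
  · rw [Int.emod_def]; exact ⟨x / m + 1, by ring⟩

lemma prime_pow_dvd (p k : ℕ) (hk : 1 ≤ k) (hp : 0 < p) (x y : ℤ)
    (hx : 2*(p:ℤ)*|midRep x (p^k)| < ((p^k : ℕ):ℤ))
    (hy : 2*(p:ℤ)*|midRep y (p^k)| < ((p^k : ℕ):ℤ))
    (hxy : ((p^(k-1):ℕ):ℤ) ∣ x - y) : ((p^k:ℕ):ℤ) ∣ x - y := by
  set a := midRep x (p^k)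
  set b := midRep y (p^k)
  have d1 : ((p^k:ℕ):ℤ) ∣ x - a := midRep_dvd x (p^k)
  have d2 : ((p^k:ℕ):ℤ) ∣ y - b := midRep_dvd y (p^k)
  have hMk : ((p^(k-1):ℕ):ℤ) ∣ ((p^k:ℕ):ℤ) := by
    exact_mod_cast pow_dvd_pow p (Nat.sub_le k 1)
  have hab : ((p^(k-1):ℕ):ℤ) ∣ a - b := by
    have : a - b = (x - y) - (x - a) + (y - b) := by ring
    rw [this]
    exact dvd_add (dvd_sub hxy (hMk.trans d1)) (hMk.trans d2)
  have hpk : ((p^k:ℕ):ℤ) = (p:ℤ) * ((p^(k-1):ℕ):ℤ) := by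
    push_cast
    rw [← pow_succ']
    congr 1
    omega
  have hM0 : (0:ℤ) < ((p^(k-1):ℕ):ℤ) := by positivity
  have habs : |a - b| < ((p^(k-1):ℕ):ℤ) := by
    rw [hpk] at hx hy
    have ha : 2 * |a| < ((p^(k-1):ℕ):ℤ) := by nlinarith [abs_nonneg a]
    have hb : 2 * |b| < ((p^(k-1):ℕ):ℤ) := by nlinarith [abs_nonneg b]
    calc |a - b| ≤ |a| + |b| := abs_sub _ _
      _ < _ := by linarith
  have : a - b = 0 := Int.eq_zero_of_abs_lt_dvd hab habs
  have hab0 : a = b := by linarith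
  have : x - y = (x - a) - (y - b) := by rw [hab0]; ring
  rw [this]
  exact dvd_sub d1 d2

lemma gamma_cond (n : ℕ) (x : ℤ) (p : ℕ) (hp : p.Prime) (hpg : p ∣ gammaFn n x) :
    2*(p:ℤ)*absRep x (nPart n p) < (nPart n p : ℤ) := by
  unfold gammaFn at hpg
  obtain ⟨q, hq, hpq⟩ := hp.prime.exists_mem_finset_dvd hpg
  by_cases hc : 2 * (q : ℤ) * absRep x (nPart n q) < (nPart n q : ℤ)
  · rw [if_pos hc] at hpq
    have hq' := Nat.prime_of_mem_primeFactors hq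
    have : p = q := (Nat.prime_dvd_prime_iff_eq hp hq').mp hpq
    rwa [this]
  · rw [if_neg hc] at hpq
    exact absurd (Nat.le_of_dvd one_pos hpq) (Nat.not_le.mpr hp.one_lt)

theorem modEq_of_dvd_gamma (n : ℕ) (hn : 0 < n) (x y : ℤ) (d : ℕ)
    (hd : d ∣ radical n) (hxy : x ≡ y [ZMOD (n / d : ℕ)])
    (hdx : d ∣ gammaFn n x) (hdy : d ∣ gammaFn n y) :
    x ≡ y [ZMOD n] := by
  have hrad0 : radical n ≠ 0 := by
    unfold radical
    exact Finset.prod_ne_zero_iff.mpr fun p hp => (Nat.prime_of_mem_primeFactors hp).pos.ne'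
  have hd0 : d ≠ 0 := by rintro rfl; exact hrad0 (Nat.eq_zero_of_zero_dvd hd)
  have hdn : d ∣ n := hd.trans (Nat.prod_primeFactors_dvd n)
  -- factorization of d is ≤ 1 everywhere
  have hrad_fac : ∀ p : ℕ, (radical n).factorization p ≤ 1 := by
    intro p
    unfold radical
    rw [Nat.factorization_prod fun q hq => (Nat.prime_of_mem_primeFactors hq).pos.ne']
    rw [Finset.sum_apply']
    have : ∀ q ∈ n.primeFactors, (Nat.factorization q) p = if q = p then 1 else 0 := by
      intro q hq
      rw [(Nat.prime_of_mem_primeFactors hq).factorization, Finsupp.single_apply]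
    rw [Finset.sum_congr rfl this, Finset.sum_ite_eq']
    split_ifs <;> simp
  have hd_fac : ∀ p : ℕ, d.factorization p ≤ 1 := fun p =>
    le_trans ((Nat.factorization_le_iff_dvd hd0 hrad0).mpr hd p) (hrad_fac p)
  -- the key dvd fact
  have hnd : ((n / d : ℕ) : ℤ) ∣ x - y := Int.ModEq.dvd hxy.symm
  rw [Int.modEq_iff_dvd, ← neg_sub, dvd_neg]
  have key : ∀ p ∈ n.primeFactors, ((p ^ n.factorization p : ℕ) : ℤ) ∣ x - y := by
    intro p hp
    have hpp := Nat.prime_of_mem_primeFactors hp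
    have hfac_div : (n / d).factorization p = n.factorization p - d.factorization p := by
      rw [Nat.factorization_div hdn]; rfl
    by_cases hpd : p ∣ d
    · -- use prime_pow_dvd
      have hk : 1 ≤ n.factorization p :=
        (Nat.Prime.factorization_pos_of_dvd hpp hn.ne' (Nat.dvd_of_mem_primeFactors hp))
      have hsub : p ^ (n.factorization p - 1) ∣ n / d := by
        refine dvd_trans (pow_dvd_pow p ?_) (Nat.ordProj_dvd (n/d) p)
        rw [hfac_div]
        have := hd_fac p
        omega
      have hsub' : ((p ^ (n.factorization p - 1) : ℕ) : ℤ) ∣ x - y :=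
        dvd_trans (by exact_mod_cast hsub) hnd
      have hx' := gamma_cond n x p hpp (hpd.trans hdx)
      have hy' := gamma_cond n y p hpp (hpd.trans hdy)
      unfold nPart at hx' hy'
      unfold absRep at hx' hy'
      exact prime_pow_dvd p (n.factorization p) hk hpp.pos x y hx' hy' hsub'
    · -- p^v divides n/d
      have hdp0 : d.factorization p = 0 := Nat.factorization_eq_zero_of_not_dvd hpd
      have hsub : p ^ n.factorization p ∣ n / d := by
        have := Nat.ordProj_dvd (n/d) p
        rwa [hfac_div, hdp0, Nat.sub_zero] at this
      exact dvd_trans (by exact_mod_cast hsub) hnd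
  -- combine
  have hneq : (∏ p ∈ n.primeFactors, p ^ n.factorization p) = n := by
    rw [← Nat.support_factorization]
    exact Nat.factorization_prod_pow_eq_self hn.ne'
  rw [← hneq]
  push_cast
  apply Finset.prod_dvd_of_coprime
  · intro p hp q hq hpq
    have hp' := Nat.prime_of_mem_primeFactors hp
    have hq' := Nat.prime_of_mem_primeFactors hq
    exact (Nat.isCoprime_iff_coprime.mpr ((Nat.coprime_primes hp' hq').mpr hpq)).pow
  · intro p hp
    have := key p hp
    push_cast at this
    exact this
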